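/- Let P be a finitary unique-cover-modular poset, let w : P → ℤ take only positive values, and let r be an integer such that (w, r) satisfies the ideal-differential condition on P. Let p ∈ P and x, y ∈ Sₚ. If there exists a ∈ P with a ⋖ p, a < x and a < y, and there exists b ∈ P with p ⋖ b, x < b and y < b, then x = y. -/

import Mathlib

open scoped BigOperators

/-- A poset is finitary if every principal lower set is finite. -/
def Finitary (P : Type*) [PartialOrder P] : Prop :=
  ∀ x : P, {y : P | y ≤ x}.Finite

/-- A poset is unique-cover-modular if any two distinct elements covering a common
element, or covered by a common element, are covered by a unique common element and
cover a unique common element. -/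
def UCM (P : Type*) [PartialOrder P] : Prop :=
  ∀ x y : P, x ≠ y →
    ((∃ a, a ⋖ x ∧ a ⋖ y) ∨ (∃ b, x ⋖ b ∧ y ⋖ b)) →
    (∃! a, a ⋖ x ∧ a ⋖ y) ∧ (∃! b, x ⋖ b ∧ y ⋖ b)

/-- The set of maximal elements of a subset `I` of a poset. -/
def maxIn {P : Type*} [PartialOrder P] (I : Set P) : Set P :=
  {a | a ∈ I ∧ ∀ b ∈ I, a ≤ b → b = a}

/-- The set of minimal elements of a subset `I` of a poset. -/
def minIn {P : Type*} [PartialOrder P] (I : Set P) : Set P :=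
  {a | a ∈ I ∧ ∀ b ∈ I, b ≤ a → b = a}

/-- `(w, r)` satisfies the ideal-differential condition on `P`: for every finite lower set
`I`, the set of minimal elements of the complement is finite and
`(∑_{a maximal in I} w a) + r = ∑_{b minimal in P ∖ I} w b`. -/
def IdealDiff {P : Type*} [PartialOrder P] (w : P → ℤ) (r : ℤ) : Prop :=
  ∀ I : Set P, I.Finite → IsLowerSet I →
    (minIn Iᶜ).Finite ∧ ((∑ᶠ a ∈ maxIn I, w a) + r = ∑ᶠ b ∈ minIn Iᶜ, w b)

/-- `Sset p` is the set of siblings of `p`: elements `x ≠ p` with `a < x < b` for some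
`a ⋖ p` and `p ⋖ b`. -/
def Sset {P : Type*} [PartialOrder P] (p : P) : Set P :=
  {x | x ≠ p ∧ ∃ a b : P, a ⋖ p ∧ p ⋖ b ∧ a < x ∧ x < b}

section Aux

variable {P : Type*} [PartialOrder P]

/-- From `a < b` we can find `c` with `a ≤ c ⋖ b`. -/
private lemma exists_le_covBy (hfin : Finitary P) {a b : P} (h : a < b) :
    ∃ c, a ≤ c ∧ c ⋖ b := by
  have hS : {z : P | a ≤ z ∧ z < b}.Finite :=
    (hfin b).subset (fun z hz => hz.2.le)
  obtain ⟨c, hc, hmax⟩ := Set.Finite.exists_maximalFor id _ hS ⟨a, le_rfl, h⟩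
  refine ⟨c, hc.1, hc.2, fun u hu hub => ?_⟩
  exact hu.not_ge (hmax ⟨hc.1.trans hu.le, hub⟩ hu.le)

/-- From `a < b` we can find `c` with `a ⋖ c ≤ b`. -/
private lemma exists_covBy_le (hfin : Finitary P) {a b : P} (h : a < b) :
    ∃ c, a ⋖ c ∧ c ≤ b := by
  have hS : {z : P | a < z ∧ z ≤ b}.Finite :=
    (hfin b).subset (fun z hz => hz.2)
  obtain ⟨c, hc, hmin⟩ := Set.Finite.exists_minimalFor id _ hS ⟨b, h, le_rfl⟩
  refine ⟨c, ⟨hc.1, fun u hu huc => ?_⟩, hc.2⟩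
  exact huc.not_ge (hmin ⟨hu, huc.le.trans hc.2⟩ huc.le)

/-- The descending ladder lemma. -/
private lemma ladder (hfin : Finitary P) (hucm : UCM P) :
    ∀ n : ℕ, ∀ ε α c π : P, (hfin ε).toFinset.card ≤ n → α ⋖ π → α < ε → c ⋖ ε →
      c < π → ¬ α ≤ c → ∃ e₂ c'', e₂ ⋖ α ∧ e₂ ⋖ c'' ∧ c'' ≤ c := by
  intro n
  induction n with
  | zero =>
    intro ε α c π hcard _ _ _ _ _
    exfalso
    have : ε ∈ (hfin ε).toFinset := by
      simp [Set.Finite.mem_toFinset, Set.mem_setOf_eq]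
    have := Finset.card_pos.mpr ⟨ε, this⟩
    omega
  | succ n ih =>
    intro ε α c π hcard hαπ hαε hcε hcπ hαc
    by_cases hc : α ⋖ ε
    · -- base: α and c are both lower covers of ε
      have hne : c ≠ α := fun h => hαc (h ▸ le_rfl)
      obtain ⟨⟨e₂, ⟨h1, h2⟩, -⟩, -⟩ := hucm c α hne (Or.inr ⟨ε, hcε, hc⟩)
      exact ⟨e₂, c, h2, h1, le_rfl⟩
    · obtain ⟨δ', hαδ', hδ'ε⟩ := exists_le_covBy hfin hαε
      have hαδ'lt : α < δ' := lt_of_le_of_ne hαδ' (fun h => hc (h ▸ hδ'ε))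
      have hne : c ≠ δ' := fun h => hαc (h ▸ hαδ')
      obtain ⟨⟨c₁, ⟨hc₁c, hc₁δ'⟩, -⟩, -⟩ := hucm c δ' hne (Or.inr ⟨ε, hcε, hδ'ε⟩)
      have hsub : (hfin δ').toFinset ⊂ (hfin ε).toFinset := by
        rw [Set.Finite.toFinset_ssubset_toFinset]
        constructor
        · exact fun z hz => hz.trans hδ'ε.lt.le
        · intro hsub
          exact absurd (hsub (le_refl ε)) (not_le_of_gt hδ'ε.lt)
      have hcard' : (hfin δ').toFinset.card ≤ n := by
        have := Finset.card_lt_card hsub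
        omega
      obtain ⟨e₂, c'', H1, H2, H3⟩ :=
        ih δ' α c₁ π hcard' hαπ hαδ'lt hc₁δ' (hc₁c.lt.trans hcπ)
          (fun h => hαc (h.trans hc₁c.le))
      exact ⟨e₂, c'', H1, H2, H3.trans hc₁c.le⟩

/-- No interval `[α, β]` with `α ⋖ π ⋖ β` contains a chain `α ⋖ δ < ε ⋖ β`. -/
private lemma noThree (hfin : Finitary P) (hucm : UCM P) :
    ∀ n : ℕ, ∀ β α π δ ε : P, (hfin β).toFinset.card ≤ n →
      α ⋖ π → π ⋖ β → α ⋖ δ → δ < ε → ε ⋖ β → False := by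
  intro n
  induction n with
  | zero =>
    intro β _ _ _ _ hcard _ _ _ _ _
    have : β ∈ (hfin β).toFinset := by
      simp [Set.Finite.mem_toFinset, Set.mem_setOf_eq]
    have := Finset.card_pos.mpr ⟨β, this⟩
    omega
  | succ n ih =>
    intro β α π δ ε hcard hαπ hπβ hαδ hδε hεβ
    have hπε : π ≠ ε := by
      rintro rfl
      exact hαπ.2 hαδ.lt hδε
    obtain ⟨⟨c₀, ⟨hc₀π, hc₀ε⟩, -⟩, -⟩ := hucm π ε hπε (Or.inr ⟨β, hπβ, hεβ⟩)
    have hnαε : ¬ α ⋖ ε := fun h => h.2 hαδ.lt hδε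
    have hαc₀ : ¬ α ≤ c₀ := by
      intro h
      rcases eq_or_lt_of_le h with rfl | hlt
      · exact hnαε hc₀ε
      · exact hαπ.2 hlt hc₀π.lt
    have hαε : α < ε := hαδ.lt.trans hδε
    obtain ⟨δ', hαδ', hδ'ε⟩ := exists_le_covBy hfin hαε
    have hαδ'lt : α < δ' := lt_of_le_of_ne hαδ' (fun h => hnαε (h ▸ hδ'ε))
    have hne : c₀ ≠ δ' := fun h => hαc₀ (h ▸ hαδ')
    obtain ⟨⟨c₁, ⟨hc₁c₀, hc₁δ'⟩, -⟩, -⟩ := hucm c₀ δ' hne (Or.inr ⟨ε, hc₀ε, hδ'ε⟩)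
    obtain ⟨e₂, c'', H1, H2, H3⟩ :=
      ladder hfin hucm ((hfin δ').toFinset.card) δ' α c₁ π le_rfl hαπ hαδ'lt hc₁δ'
        (hc₁c₀.lt.trans hc₀π.lt) (fun h => hαc₀ (h.trans hc₁c₀.le))
    have hsub : (hfin π).toFinset ⊂ (hfin β).toFinset := by
      rw [Set.Finite.toFinset_ssubset_toFinset]
      constructor
      · exact fun z hz => hz.trans hπβ.lt.le
      · intro hsub
        exact absurd (hsub (le_refl β)) (not_le_of_gt hπβ.lt)
    have hcard' : (hfin π).toFinset.card ≤ n := by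
      have := Finset.card_lt_card hsub
      omega
    exact ih π e₂ α c'' c₀ hcard' H1 hαπ H2 (lt_of_le_of_lt H3 hc₁c₀.lt) hc₀π

/-- Local gradedness: if `a ⋖ p ⋖ b` and `a < x < b` then `a ⋖ x ⋖ b`. -/
private lemma graded (hfin : Finitary P) (hucm : UCM P) {a p b x : P}
    (hap : a ⋖ p) (hpb : p ⋖ b) (hax : a < x) (hxb : x < b) : a ⋖ x ∧ x ⋖ b := by
  have hxb' : x ⋖ b := by
    obtain ⟨ε, hxε, hεb⟩ := exists_le_covBy hfin hxb
    rcases eq_or_lt_of_le hxε with rfl | hlt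
    · exact hεb
    · obtain ⟨δ, haδ, hδx⟩ := exists_covBy_le hfin hax
      exact absurd (noThree hfin hucm ((hfin b).toFinset.card) b a p δ ε le_rfl
        hap hpb haδ (lt_of_le_of_lt hδx hlt) hεb) not_false
  obtain ⟨δ, haδ, hδx⟩ := exists_covBy_le hfin hax
  rcases eq_or_lt_of_le hδx with rfl | hlt
  · exact ⟨haδ, hxb'⟩
  · exact absurd (noThree hfin hucm ((hfin b).toFinset.card) b a p δ x le_rfl
      hap hpb haδ hlt hxb') not_false

private lemma lower_of_min {I : Set P} {m : P} (hm : m ∈ minIn Iᶜ) :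
    ∀ u, u < m → u ∈ I := by
  intro u hu
  by_contra h
  exact hu.ne (hm.2 u h hu.le)

private lemma stepMax {I : Set P} (hI : IsLowerSet I) {m : P} (hm : m ∈ minIn Iᶜ) :
    maxIn (insert m I) = insert m (maxIn I \ {c | c < m}) := by
  ext z
  constructor
  · rintro ⟨hzJ, hmax⟩
    rcases hzJ with rfl | hzI
    · exact Or.inl rfl
    · refine Or.inr ⟨⟨hzI, fun d hd hzd => hmax d (Or.inr hd) hzd⟩, ?_⟩
      intro hzm
      exact hzm.ne' (hmax m (Set.mem_insert m I) hzm.le)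
  · rintro (rfl | ⟨⟨hzI, hzmax⟩, hzm⟩)
    · refine ⟨Set.mem_insert z I, fun d hd hzd => ?_⟩
      rcases hd with rfl | hdI
      · rfl
      · exact absurd (hI hzd hdI) hm.1
    · refine ⟨Or.inr hzI, fun d hd hzd => ?_⟩
      rcases hd with rfl | hdI
      · exact absurd (lt_of_le_of_ne hzd (fun h => hm.1 (h ▸ hzI))) hzm
      · exact hzmax d hdI hzd

private lemma stepMin {I : Set P} (hI : IsLowerSet I) {m : P} (hm : m ∈ minIn Iᶜ) :
    minIn (insert m I)ᶜ =
      (minIn Iᶜ \ {m}) ∪ {z | m ⋖ z ∧ ∀ u, u < z → u ∈ insert m I} := by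
  ext z
  constructor
  · rintro ⟨hzc, hzmin⟩
    have hzm : z ≠ m := fun h => hzc (h ▸ Set.mem_insert m I)
    have hzI : z ∉ I := fun h => hzc (Or.inr h)
    by_cases hz0 : z ∈ minIn Iᶜ
    · exact Or.inl ⟨hz0, hzm⟩
    · right
      have : ¬ ∀ b ∈ Iᶜ, b ≤ z → b = z := fun h => hz0 ⟨hzI, h⟩
      push_neg at this
      obtain ⟨u, huI, huz, hune⟩ := this
      have hultz : u < z := lt_of_le_of_ne huz hune
      have humem : u ∈ insert m I := by
        by_contra h
        exact hune (hzmin u h huz)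
      have hmz : m < z := by
        rcases humem with rfl | h
        · exact hultz
        · exact absurd h huI
      have hcov : m ⋖ z := by
        refine ⟨hmz, fun v hmv hvz => ?_⟩
        have hvI : v ∉ I := fun h => hm.1 (hI hmv.le h)
        have hvm : v ≠ m := hmv.ne'
        have : v ∉ insert m I := by
          rintro (rfl | h)
          · exact hvm rfl
          · exact hvI h
        exact hvz.ne (hzmin v this hvz.le)
      refine ⟨hcov, fun u hu => ?_⟩
      by_contra h
      exact hu.ne (hzmin u h hu.le)
  · rintro (⟨⟨hzI, hzmin⟩, hzm⟩ | ⟨hmz, hall⟩)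
    · refine ⟨?_, fun b hb hbz => hzmin b (fun hbI => hb (Or.inr hbI)) hbz⟩
      rintro (rfl | h)
      · exact hzm rfl
      · exact hzI h
    · constructor
      · rintro (rfl | h)
        · exact lt_irrefl z hmz.lt
        · exact hm.1 (hI hmz.lt.le h)
      · intro b hb hbz
        by_contra hne
        exact hb (hall b (lt_of_le_of_ne hbz hne))

private lemma stepSum {w : P → ℤ} {r : ℤ} (hdiff : IdealDiff w r)
    {I : Set P} (hIfin : I.Finite) (hI : IsLowerSet I) {m : P} (hm : m ∈ minIn Iᶜ) :
    ∑ᶠ z ∈ {z : P | m ⋖ z ∧ ∀ u, u < z → u ∈ insert m I}, w z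
      = 2 * w m - ∑ᶠ c ∈ maxIn I ∩ {c | c < m}, w c := by
  set N := {z : P | m ⋖ z ∧ ∀ u, u < z → u ∈ insert m I} with hN
  have hJ : IsLowerSet (insert m I) := by
    intro u v hvu hu
    rcases hu with rfl | huI
    · rcases eq_or_lt_of_le hvu with rfl | hlt
      · exact Set.mem_insert _ _
      · exact Or.inr (lower_of_min hm v hlt)
    · exact Or.inr (hI hvu huI)
  obtain ⟨hminI, heqI⟩ := hdiff I hIfin hI
  obtain ⟨hminJ, heqJ⟩ := hdiff (insert m I) (hIfin.insert m) hJ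
  -- finiteness facts
  have hmaxIfin : (maxIn I).Finite := hIfin.subset (fun z hz => hz.1)
  have hNfin : N.Finite := by
    have h2 := stepMin hI hm
    have : ((minIn Iᶜ \ {m}) ∪ N).Finite := h2 ▸ hminJ
    exact this.subset Set.subset_union_right
  -- max side
  have e1 : ∑ᶠ z ∈ maxIn (insert m I), w z
      = w m + ∑ᶠ z ∈ maxIn I \ {c | c < m}, w z := by
    have hd1 : Disjoint ({m} : Set P) (maxIn I \ {c | c < m}) := by
      rw [Set.disjoint_left]
      rintro z rfl hz
      exact hm.1 hz.1.1
    rw [stepMax hI hm, Set.insert_eq,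
      finsum_mem_union hd1 (Set.finite_singleton m) (hmaxIfin.diff), finsum_mem_singleton]
  have e2 : ∑ᶠ z ∈ maxIn I, w z
      = (∑ᶠ z ∈ maxIn I \ {c | c < m}, w z) + ∑ᶠ z ∈ maxIn I ∩ {c | c < m}, w z := by
    have hd2 : Disjoint (maxIn I \ {c | c < m}) (maxIn I ∩ {c | c < m}) := by
      rw [Set.disjoint_left]
      rintro z hz1 hz2
      exact hz1.2 hz2.2
    rw [← finsum_mem_union hd2 (hmaxIfin.diff) (hmaxIfin.inter_of_left _),
      Set.diff_union_inter]
  -- min side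
  have e3 : ∑ᶠ z ∈ minIn Iᶜ, w z = w m + ∑ᶠ z ∈ minIn Iᶜ \ {m}, w z := by
    have heq : minIn Iᶜ = {m} ∪ (minIn Iᶜ \ {m}) := by
      rw [← Set.insert_eq, Set.insert_diff_singleton, Set.insert_eq_of_mem hm]
    have hd3 : Disjoint ({m} : Set P) (minIn Iᶜ \ {m}) := by
      rw [Set.disjoint_left]
      rintro z rfl hz
      exact hz.2 rfl
    conv_lhs => rw [heq]
    rw [finsum_mem_union hd3 (Set.finite_singleton m) (hminI.diff),
      finsum_mem_singleton]
  have e4 : ∑ᶠ z ∈ minIn (insert m I)ᶜ, w z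
      = (∑ᶠ z ∈ minIn Iᶜ \ {m}, w z) + ∑ᶠ z ∈ N, w z := by
    have hd4 : Disjoint (minIn Iᶜ \ {m}) N := by
      rw [Set.disjoint_left]
      rintro z hz1 hz2
      have hmz : m < z := hz2.1.lt
      exact hmz.ne (hz1.1.2 m hm.1 hmz.le)
    rw [stepMin hI hm, finsum_mem_union hd4 (hminI.diff) hNfin]
  linarith

end Aux

/-- Two siblings of `p` sharing a common lower cover of `p` below them and a common upper
cover of `p` above them are equal. -/
theorem stmt11 {P : Type*} [PartialOrder P]
    (hfin : Finitary P) (hucm : UCM P)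
    (w : P → ℤ) (hw : ∀ x : P, 0 < w x)
    (r : ℤ) (hdiff : IdealDiff w r)
    (p : P) (x y : P) (hx : x ∈ Sset p) (hy : y ∈ Sset p)
    (ha : ∃ a : P, a ⋖ p ∧ a < x ∧ a < y)
    (hb : ∃ b : P, p ⋖ b ∧ x < b ∧ y < b) :
    x = y := by
  obtain ⟨a, hap, hax, hay⟩ := ha
  obtain ⟨b, hpb, hxb, hyb⟩ := hb
  by_contra hxy
  -- gradedness
  obtain ⟨hax2, hxb2⟩ := graded hfin hucm hap hpb hax hxb
  obtain ⟨hay2, hyb2⟩ := graded hfin hucm hap hpb hay hyb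
  -- incomparabilities
  have hnxy : ¬ x < y := fun h => hxb2.2 h hyb
  have hnyx : ¬ y < x := fun h => hyb2.2 h hxb
  have hnpx : ¬ p < x := fun h => hpb.2 h hxb
  have hnxp : ¬ x < p := fun h => hap.2 hax h
  have hnpy : ¬ p < y := fun h => hpb.2 h hyb
  have hnyp : ¬ y < p := fun h => hap.2 hay h
  have hxp : x ≠ p := hx.1
  have hyp : y ≠ p := hy.1
  -- the ideals
  set Dx : Set P := {z | z < x} with hDx
  set Dy : Set P := {z | z < y} with hDy
  set I0 : Set P := Dx ∪ Dy with hI0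
  set I2 : Set P := insert y I0 with hI2
  have hI0fin : I0.Finite := by
    apply Set.Finite.union
    · exact (hfin x).subset (fun z hz => le_of_lt hz)
    · exact (hfin y).subset (fun z hz => le_of_lt hz)
  have hI0low : IsLowerSet I0 := by
    intro u v hvu hu
    rcases hu with h | h
    · exact Or.inl (lt_of_le_of_lt hvu h)
    · exact Or.inr (lt_of_le_of_lt hvu h)
  have hxI0 : x ∉ I0 := by
    rintro (h | h)
    · exact lt_irrefl x h
    · exact hnxy h
  have hyI0 : y ∉ I0 := by
    rintro (h | h)
    · exact hnyx h
    · exact lt_irrefl y h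
  have hxmin0 : x ∈ minIn I0ᶜ := by
    refine ⟨hxI0, fun c hc hcx => ?_⟩
    by_contra hne
    exact hc (Or.inl (lt_of_le_of_ne hcx hne))
  have hymin0 : y ∈ minIn I0ᶜ := by
    refine ⟨hyI0, fun c hc hcy => ?_⟩
    by_contra hne
    exact hc (Or.inr (lt_of_le_of_ne hcy hne))
  have hI2fin : I2.Finite := hI0fin.insert y
  have hI2low : IsLowerSet I2 := by
    intro u v hvu hu
    rcases hu with rfl | h
    · rcases eq_or_lt_of_le hvu with rfl | hlt
      · exact Set.mem_insert _ _
      · exact Or.inr (Or.inr hlt)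
    · exact Or.inr (hI0low hvu h)
  have hxmin2 : x ∈ minIn I2ᶜ := by
    refine ⟨?_, fun c hc hcx => ?_⟩
    · rintro (rfl | h)
      · exact hxy rfl
      · exact hxI0 h
    · by_contra hne
      exact hc (Or.inr (Or.inl (lt_of_le_of_ne hcx hne)))
  -- step sums
  have S1 := stepSum hdiff hI0fin hI0low hxmin0
  have S2 := stepSum hdiff hI2fin hI2low hxmin2
  -- the two "new cover" sets coincide
  have hNeq : {z : P | x ⋖ z ∧ ∀ u, u < z → u ∈ insert x I0}
      = {z : P | x ⋖ z ∧ ∀ u, u < z → u ∈ insert x I2} := by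
    ext z
    constructor
    · rintro ⟨hxz, hall⟩
      refine ⟨hxz, fun u hu => ?_⟩
      rcases hall u hu with rfl | h
      · exact Set.mem_insert u _
      · exact Or.inr (Or.inr h)
    · rintro ⟨hxz, hall⟩
      refine ⟨hxz, fun u hu => ?_⟩
      by_cases huy : u = y
      · exfalso
        have hu' : y < z := huy ▸ hu
        have hyz : y ⋖ z := by
          refine ⟨hu', fun v hyv hvz => ?_⟩
          rcases hall v hvz with rfl | (rfl | (h | h))
          · exact hnyx hyv
          · exact lt_irrefl _ hyv
          · exact hnyx (hyv.trans h)
          · exact (lt_asymm hyv) h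
        have huniq := (hucm x y hxy (Or.inr ⟨b, hxb2, hyb2⟩)).2
        have hzb : z = b := huniq.unique ⟨hxz, hyz⟩ ⟨hxb2, hyb2⟩
        have hpz : p < z := hzb ▸ hpb.lt
        rcases hall p hpz with rfl | (rfl | (h | h))
        · exact hxp rfl
        · exact hyp rfl
        · exact hnpx h
        · exact hnpy h
      · rcases hall u hu with rfl | (rfl | h)
        · exact Set.mem_insert u _
        · exact absurd rfl huy
        · exact Or.inr h
  -- compute maxIn I2 ∩ Dx
  have hMax2 : maxIn I2 = insert y (maxIn I0 \ Dy) := stepMax hI0low hymin0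
  have hA2 : maxIn I2 ∩ Dx = (maxIn I0 ∩ Dx) \ Dy := by
    rw [hMax2]
    ext c
    constructor
    · rintro ⟨hc, hcx⟩
      rcases hc with rfl | ⟨hcM, hcy⟩
      · exact absurd hcx hnyx
      · exact ⟨⟨hcM, hcx⟩, hcy⟩
    · rintro ⟨⟨hcM, hcx⟩, hcy⟩
      exact ⟨Or.inr ⟨hcM, hcy⟩, hcx⟩
  have hA0fin : (maxIn I0 ∩ Dx).Finite :=
    (hI0fin.subset (fun z hz => hz.1)).inter_of_left _
  have esplit : ∑ᶠ c ∈ maxIn I0 ∩ Dx, w c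
      = (∑ᶠ c ∈ (maxIn I0 ∩ Dx) \ Dy, w c) + ∑ᶠ c ∈ (maxIn I0 ∩ Dx) ∩ Dy, w c := by
    have hd5 : Disjoint ((maxIn I0 ∩ Dx) \ Dy) ((maxIn I0 ∩ Dx) ∩ Dy) := by
      rw [Set.disjoint_left]
      rintro z hz1 hz2
      exact hz1.2 hz2.2
    rw [← finsum_mem_union hd5 (hA0fin.diff) (hA0fin.inter_of_left _),
      Set.diff_union_inter]
  have hsum12 : ∑ᶠ z ∈ {z : P | x ⋖ z ∧ ∀ u, u < z → u ∈ insert x I0}, w z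
      = ∑ᶠ z ∈ {z : P | x ⋖ z ∧ ∀ u, u < z → u ∈ insert x I2}, w z := by
    rw [hNeq]
  rw [hA2] at S2
  have hzero : ∑ᶠ c ∈ (maxIn I0 ∩ Dx) ∩ Dy, w c = 0 := by linarith only [S1, S2, esplit, hsum12]
  have haM : a ∈ (maxIn I0 ∩ Dx) ∩ Dy := by
    refine ⟨⟨⟨Or.inl hax, ?_⟩, hax⟩, hay⟩
    rintro d (hd | hd) had
    · by_contra hne
      exact hax2.2 (lt_of_le_of_ne had (fun h => hne h.symm)) hd
    · by_contra hne
      exact hay2.2 (lt_of_le_of_ne had (fun h => hne h.symm)) hd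
  have hCfin : ((maxIn I0 ∩ Dx) ∩ Dy).Finite := hA0fin.inter_of_left _
  rw [finsum_mem_eq_finite_toFinset_sum w hCfin] at hzero
  have hle : w a ≤ ∑ c ∈ hCfin.toFinset, w c :=
    Finset.single_le_sum (fun i _ => (hw i).le) (hCfin.mem_toFinset.mpr haM)
  have := hw a
  omega
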